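/- Let p_N be a trigonometric polynomial of degree at most N on ℝ (a finite linear combination of cos(kx) and sin(kx) for 0 ≤ k ≤ N) with real coefficients, extended to the complex plane. Then for any r > 0, the supremum of |p_N(z)| over the strip {z ∈ ℂ : |Im z| ≤ r} is at most e^{rN} times the supremum of |p_N(x)| over x ∈ ℝ. -/

import Mathlib

open Complex Finset

/-- A real trigonometric polynomial of degree at most `N`, extended to
the complex plane, satisfies `|p(z)| ≤ e^{rN} · sup_{x∈ℝ} |p(x)|` on the strip
`|Im z| ≤ r`. -/
theorem trig_poly_strip_bound (N : ℕ) (a b : ℕ → ℝ)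
    (P : ℂ → ℂ)
    (hP : ∀ z : ℂ, P z = (a 0 : ℂ) +
      ∑ k ∈ Finset.Icc 1 N, ((a k : ℂ) * Complex.cos (k * z) + (b k : ℂ) * Complex.sin (k * z)))
    (r : ℝ) (hr : 0 < r) :
    ∀ z : ℂ, |z.im| ≤ r →
      ‖P z‖ ≤ Real.exp (r * N) * ⨆ x : ℝ, ‖P (x : ℂ)‖ := by
  set M := ⨆ x : ℝ, ‖P (x : ℂ)‖ with hM
  -- boundedness on ℝ
  have hbdd : BddAbove (Set.range fun x : ℝ => ‖P (x : ℂ)‖) := by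
    refine ⟨|a 0| + ∑ k ∈ Finset.Icc 1 N, (|a k| + |b k|), ?_⟩
    rintro _ ⟨x, rfl⟩
    simp only
    rw [hP]
    refine (norm_add_le _ _).trans ?_
    gcongr
    · simp
    refine (norm_sum_le _ _).trans (Finset.sum_le_sum ?_)
    intro k _
    refine (norm_add_le _ _).trans ?_
    have h1 : (k : ℂ) * (x : ℂ) = ((k * x : ℝ) : ℂ) := by push_cast; ring
    rw [norm_mul, norm_mul, h1, ← Complex.ofReal_cos, ← Complex.ofReal_sin,
      Complex.norm_real, Complex.norm_real, Complex.norm_real, Complex.norm_real]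
    simp only [Real.norm_eq_abs]
    gcongr
    · calc |a k| * |Real.cos (k*x)| ≤ |a k| * 1 := by gcongr; exact Real.abs_cos_le_one _
        _ = |a k| := mul_one _
    · calc |b k| * |Real.sin (k*x)| ≤ |b k| * 1 := by gcongr; exact Real.abs_sin_le_one _
        _ = |b k| := mul_one _
  have hle : ∀ x : ℝ, ‖P (x : ℂ)‖ ≤ M := fun x =>
    le_ciSup hbdd x
  have hM0 : 0 ≤ M := le_trans (norm_nonneg _) (hle 0)
  -- the auxiliary polynomial
  set h : ℂ → ℂ := fun u : ℂ => (a 0 : ℂ) * u ^ N + ∑ k ∈ Finset.Icc 1 N,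
      ((a k : ℂ) * (u ^ (N + k) + u ^ (N - k)) / 2 +
       (b k : ℂ) * (u ^ (N - k) - u ^ (N + k)) * I / 2) with hh
  have hkey : ∀ w : ℂ, h (Complex.exp (I * w)) = Complex.exp ((N : ℂ) * (I * w)) * P w := by
    intro w
    set E := Complex.exp (I * w) with hE
    have hE0 : E ≠ 0 := Complex.exp_ne_zero _
    have hpow : ∀ m : ℕ, E ^ m = Complex.exp ((m : ℂ) * (I * w)) := fun m =>
      (Complex.exp_nat_mul _ m).symm
    rw [hh, hP w, mul_add, Finset.mul_sum]
    simp only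
    congr 1
    · rw [hpow]; ring
    refine Finset.sum_congr rfl fun k hk => ?_
    have hkN : k ≤ N := (Finset.mem_Icc.mp hk).2
    have hEk : Complex.exp ((k:ℂ) * w * I) = E ^ k := by
      rw [hpow]; congr 1; ring
    have hEk' : Complex.exp (-((k:ℂ) * w) * I) = (E ^ k)⁻¹ := by
      rw [show -((k:ℂ) * w) * I = -((k:ℂ) * w * I) by ring, Complex.exp_neg, hEk]
    have hsub : E ^ (N - k) = E ^ N * (E ^ k)⁻¹ := pow_sub₀ E hE0 hkN
    have hadd : E ^ (N + k) = E ^ N * E ^ k := pow_add E N k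
    rw [Complex.cos, Complex.sin, hEk, hEk', hsub, hadd, ← hpow N]
    field_simp
  -- differentiability
  have hdiff : Differentiable ℂ h := by
    rw [hh]
    apply Differentiable.add
    · exact (differentiable_const _).mul (differentiable_pow N)
    · apply Differentiable.fun_sum
      intro k _
      fun_prop
  -- maximum modulus on the closed unit disk
  have hmax : ∀ u : ℂ, ‖u‖ ≤ 1 → ‖h u‖ ≤ M := by
    intro u hu
    have hcl : u ∈ closure (Metric.ball (0 : ℂ) 1) := by
      rw [closure_ball (0 : ℂ) one_ne_zero]
      simpa [Complex.dist_eq] using hu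
    refine Complex.norm_le_of_forall_mem_frontier_norm_le
      Metric.isBounded_ball hdiff.diffContOnCl ?_ hcl
    intro v hv
    rw [frontier_ball (0 : ℂ) one_ne_zero] at hv
    have hv1 : ‖v‖ = 1 := by simpa [Complex.dist_eq] using hv
    obtain ⟨θ, hθ⟩ := (Complex.norm_eq_one_iff v).mp hv1
    have hv2 : v = Complex.exp (I * (θ : ℂ)) := by rw [← hθ]; ring_nf
    have : h v = Complex.exp ((N : ℂ) * (I * (θ : ℂ))) * P (θ : ℂ) := by
      rw [hv2, hkey]
    rw [show ‖h v‖ = ‖h v‖ from rfl, this, norm_mul, Complex.norm_exp]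
    have : (((N : ℂ)) * (I * (θ : ℂ))).re = 0 := by simp
    rw [this, Real.exp_zero, one_mul]
    exact hle θ
  -- main estimate for 0 ≤ Im w ≤ r
  have hmain : ∀ w : ℂ, 0 ≤ w.im → w.im ≤ r → ‖P w‖ ≤ Real.exp (r * N) * M := by
    intro w h0 hr'
    have hre : (I * w).re = -w.im := by simp
    have habs : ‖Complex.exp (I * w)‖ = Real.exp (-w.im) := by
      rw [Complex.norm_exp, hre]
    have hu : ‖Complex.exp (I * w)‖ ≤ 1 := by
      rw [habs]; exact Real.exp_le_one_iff.mpr (neg_nonpos.mpr h0)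
    have h1 := hmax _ hu
    rw [hkey w, norm_mul, Complex.norm_exp] at h1
    have hre2 : (((N : ℂ)) * (I * w)).re = -(N * w.im) := by
      simp [Complex.mul_re]
    rw [hre2] at h1
    have hexp : (0:ℝ) < Real.exp (-(N * w.im)) := Real.exp_pos _
    have h2 : ‖P w‖ ≤ Real.exp ((N:ℝ) * w.im) * M := by
      have h3 := mul_le_mul_of_nonneg_left h1 (Real.exp_pos ((N:ℝ) * w.im)).le
      rwa [← mul_assoc, ← Real.exp_add, add_neg_cancel, Real.exp_zero, one_mul] at h3
    refine h2.trans (mul_le_mul_of_nonneg_right (Real.exp_le_exp.mpr ?_) hM0)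
    nlinarith [Nat.cast_nonneg (α := ℝ) N]
  -- conjugation symmetry
  have hconj : ∀ w : ℂ, P ((starRingEnd ℂ) w) = (starRingEnd ℂ) (P w) := by
    intro w
    rw [hP, hP]
    simp only [map_add, map_sum, map_mul, Complex.conj_ofReal]
    congr 1
    refine Finset.sum_congr rfl fun k _ => ?_
    rw [← Complex.cos_conj, ← Complex.sin_conj, map_mul]
    simp
  intro z hz
  rcases le_or_gt 0 z.im with him | him
  · exact hmain z him (le_trans (le_abs_self _) hz)
  · have h1 : ‖P z‖ = ‖P ((starRingEnd ℂ) z)‖ := by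
      rw [hconj, Complex.norm_conj]
    rw [h1]
    refine hmain _ ?_ ?_
    · simp [le_of_lt him]
    · simp only [Complex.conj_im]
      rw [abs_of_nonpos (le_of_lt him)] at hz
      linarith
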